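/- For every positive integer n, the sum over k from 0 to n of (16/5)^k * (n/(n+k)) * C(n+k, n-k) equals (25^n + 1)/(2·5^n). -/

import Mathlib

open Finset

-- Pascal-based coefficient identity
lemma pas (a k : ℕ) : (a+3).choose (k+2) + (a+1).choose (k+2) =
    2 * ((a+2).choose (k+2)) + (a+1).choose k := by
  simp [Nat.choose_succ_succ]
  ring

noncomputable def G (n : ℕ) : ℚ :=
  ∑ k ∈ range (n+1), (16/5 : ℚ)^k * ((n+k).choose (2*k))

lemma Gext (n m : ℕ) (h : n + 1 ≤ m) :
    G n = ∑ k ∈ range m, (16/5 : ℚ)^k * ((n+k).choose (2*k)) := by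
  unfold G
  apply Finset.sum_subset
  · exact Finset.range_subset_range.2 h
  · intro k _ hk
    simp only [Finset.mem_range, not_lt] at hk
    have : (n+k).choose (2*k) = 0 := Nat.choose_eq_zero_of_lt (by omega)
    simp [this]

lemma Grec (n : ℕ) : G (n+2) + G n = (26/5) * G (n+1) := by
  have h2 : G (n+2) = ∑ k ∈ range (n+3), (16/5 : ℚ)^k * ((n+2+k).choose (2*k)) := by
    rw [Gext (n+2) (n+3) (by omega)]
  have h0 : G n = ∑ k ∈ range (n+3), (16/5 : ℚ)^k * ((n+k).choose (2*k)) :=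
    Gext n (n+3) (by omega)
  have h1 : G (n+1) = ∑ k ∈ range (n+3), (16/5 : ℚ)^k * ((n+1+k).choose (2*k)) :=
    Gext (n+1) (n+3) (by omega)
  have h1' : G (n+1) = ∑ k ∈ range (n+2), (16/5 : ℚ)^k * ((n+1+k).choose (2*k)) := rfl
  rw [h2, h0]
  have key : ∑ k ∈ range (n+3), ((16/5 : ℚ)^k * ((n+2+k).choose (2*k))
        + (16/5 : ℚ)^k * ((n+k).choose (2*k)))
      = (∑ k ∈ range (n+3), (16/5 : ℚ)^k * (2 * ((n+1+k).choose (2*k))))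
        + (16/5) * ∑ k ∈ range (n+2), (16/5 : ℚ)^k * ((n+1+k).choose (2*k)) := by
    rw [Finset.sum_range_succ' (fun k => (16/5 : ℚ)^k * ((n+2+k).choose (2*k))
        + (16/5 : ℚ)^k * ((n+k).choose (2*k))) (n+2),
      Finset.sum_range_succ' (fun k => (16/5 : ℚ)^k * (2 * ((n+1+k).choose (2*k)))) (n+2),
      Finset.mul_sum]
    have step : ∀ k ∈ range (n+2),
        (16/5 : ℚ)^(k+1) * ((n+2+(k+1)).choose (2*(k+1)))
          + (16/5 : ℚ)^(k+1) * ((n+(k+1)).choose (2*(k+1)))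
        = (16/5 : ℚ)^(k+1) * (2 * ((n+1+(k+1)).choose (2*(k+1))))
          + (16/5) * ((16/5 : ℚ)^k * ((n+1+k).choose (2*k))) := by
      intro k _
      have hp := pas (n+k) (2*k)
      have hc : ((n+k+3).choose (2*k+2) : ℚ) + ((n+k+1).choose (2*k+2))
          = 2 * ((n+k+2).choose (2*k+2)) + ((n+k+1).choose (2*k)) := by
        exact_mod_cast congrArg (Nat.cast : ℕ → ℚ) hp
      have e1 : n+2+(k+1) = n+k+3 := by ring
      have e2 : n+(k+1) = n+k+1 := by ring
      have e3 : n+1+(k+1) = n+k+2 := by ring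
      have e4 : 2*(k+1) = 2*k+2 := by ring
      have e5 : n+1+k = n+k+1 := by ring
      rw [e1, e2, e3, e4, e5]
      rw [pow_succ]
      linear_combination ((16/5:ℚ)^k * (16/5)) * hc
    rw [Finset.sum_congr rfl step]
    rw [Finset.sum_add_distrib]
    simp [Nat.choose_zero_right]
    ring
  rw [← Finset.sum_add_distrib] at *
  rw [key, ← h1']
  have h2g : ∑ k ∈ range (n+3), (16/5 : ℚ)^k * (2 * ((n+1+k).choose (2*k)))
      = 2 * G (n+1) := by
    rw [h1, Finset.mul_sum]
    exact Finset.sum_congr rfl (fun k _ => by ring)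
  rw [h2g]
  ring

lemma Gcf : ∀ n : ℕ, G n = (5 * 25^n + 1) / (6 * 5^n) := by
  have key : ∀ n : ℕ, G n = (5 * 25^n + 1) / (6 * 5^n)
      ∧ G (n+1) = (5 * 25^(n+1) + 1) / (6 * 5^(n+1)) := by
    intro n
    induction n with
    | zero =>
      constructor
      · simp [G]; norm_num
      · simp [G, Finset.sum_range_succ]
        norm_num
    | succ m ih =>
      refine ⟨ih.2, ?_⟩
      have hr := Grec m
      have h5 : (5:ℚ)^m ≠ 0 := by positivity
      rw [ih.1, ih.2] at hr
      have : G (m+2) = (26/5) * ((5 * 25^(m+1) + 1) / (6 * 5^(m+1)))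
          - (5 * 25^m + 1) / (6 * 5^m) := by linarith
      rw [this]
      field_simp
      ring
  exact fun n => (key n).1

theorem stmt_11 (n : ℕ) (hn : 0 < n) :
    ∑ k ∈ range (n + 1), ((16 : ℚ) / 5) ^ k * ((n : ℚ) / (n + k)) *
      (Nat.choose (n + k) (n - k)) =
    ((25 : ℚ) ^ n + 1) / (2 * 5 ^ n) := by
  obtain ⟨m, rfl⟩ : ∃ m, n = m + 1 := ⟨n - 1, by omega⟩
  have step : ∀ k ∈ range (m + 2),
      ((16 : ℚ) / 5) ^ k * (((m+1 : ℕ) : ℚ) / ((m+1 : ℕ) + k)) *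
        (Nat.choose ((m+1) + k) ((m+1) - k))
      = ((16/5 : ℚ)^k * (((m+1)+k).choose (2*k)) + (16/5 : ℚ)^k * ((m+k).choose (2*k))) / 2 := by
    intro k hk
    rw [Finset.mem_range] at hk
    have hkm : k ≤ m + 1 := by omega
    have hsym : ((m+1) + k).choose ((m+1) - k) = ((m+1)+k).choose (2*k) := by
      rw [← Nat.choose_symm (by omega : (m+1) - k ≤ (m+1)+k)]
      congr 1
      omega
    rw [hsym]
    have hmul := Nat.choose_mul_succ_eq (m + k) (2*k)
    have hsub : m + k + 1 - 2*k = m + 1 - k := by omega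
    rw [hsub] at hmul
    have hq : ((m+k).choose (2*k) : ℚ) * (m + k + 1)
        = ((m+k+1).choose (2*k)) * ((m:ℚ) + 1 - k) := by
      have := congrArg (Nat.cast : ℕ → ℚ) hmul
      push_cast [Nat.cast_sub hkm] at this
      linarith [this]
    have hne : ((m:ℚ) + 1) + k ≠ 0 := by positivity
    have e : (m+1) + k = m + k + 1 := by ring
    rw [e]
    field_simp
    push_cast
    linear_combination (-1:ℚ) * hq
  rw [Finset.sum_congr rfl step]
  have split : ∑ k ∈ range (m + 2),
      ((16/5 : ℚ)^k * (((m+1)+k).choose (2*k)) + (16/5 : ℚ)^k * ((m+k).choose (2*k))) / 2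
      = (G (m+1) + ∑ k ∈ range (m+2), (16/5 : ℚ)^k * ((m+k).choose (2*k))) / 2 := by
    unfold G
    rw [← Finset.sum_div, Finset.sum_add_distrib]
  rw [split, ← Gext m (m+2) (by omega), Gcf, Gcf]
  have h5 : (5:ℚ)^m ≠ 0 := by positivity
  field_simp
  ring
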